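/- Let μ > 0 be real. Define F₁(ξ) = (ξ − √μ/2)·√(ξ+√μ) for ξ > −√μ, F₂(ξ₁,ξ₂) = 1/(2√((ξ₁+√μ)(ξ₂+√μ))·(√(ξ₁+√μ)+√(ξ₂+√μ))²), and F₃(ξ₁,ξ₂,ξ₃) = 1/(6√μ·(ξ₁+√μ)^{3/2}(ξ₂+√μ)^{3/2}(ξ₃+√μ)^{3/2}). Then for all pairwise distinct ξ₁, ξ₂, ξ₃ > −√μ, the value of F₁(ξ₁)·F₃(ξ₁,ξ₂,ξ₃) + F₂(ξ₁,ξ₂)·F₂(ξ₁,ξ₃) + D₂ + D₃ does not depend on ξ₁ (i.e. it is a function of ξ₂ and ξ₃ only), where D₂ is the derivative at t = ξ₂ of t ↦ (F₂(ξ₁,ξ₃) − F₂(t,ξ₃))/(ξ₁ − t) and D₃ is the derivative at t = ξ₃ of t ↦ (F₂(ξ₁,ξ₂) − F₂(ξ₂,t))/(ξ₁ − t). -/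

import Mathlib

/-- Genus-zero disk amplitude of pure DT. -/
noncomputable def pureDTDisk (μ ξ : ℝ) : ℝ :=
  (ξ - Real.sqrt μ / 2) * Real.sqrt (ξ + Real.sqrt μ)

/-- Genus-zero cylinder amplitude of pure DT. -/
noncomputable def pureDTCylinder (μ ξ₁ ξ₂ : ℝ) : ℝ :=
  1 / (2 * Real.sqrt ((ξ₁ + Real.sqrt μ) * (ξ₂ + Real.sqrt μ)) *
    (Real.sqrt (ξ₁ + Real.sqrt μ) + Real.sqrt (ξ₂ + Real.sqrt μ)) ^ 2)

/-- Genus-zero three-holed-sphere amplitude of pure DT. -/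
noncomputable def pureDTThreeHoled (μ ξ₁ ξ₂ ξ₃ : ℝ) : ℝ :=
  1 / (6 * Real.sqrt μ * (ξ₁ + Real.sqrt μ) ^ ((3 : ℝ) / 2)
    * (ξ₂ + Real.sqrt μ) ^ ((3 : ℝ) / 2) * (ξ₃ + Real.sqrt μ) ^ ((3 : ℝ) / 2))

/-- The (h,N) = (0,3) combination in the perturbative Schwinger–Dyson equation
of pure DT: `F₁(ξ₁)F₃(ξ₁,ξ₂,ξ₃) + F₂(ξ₁,ξ₂)F₂(ξ₁,ξ₃) + D₂ + D₃`. -/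
noncomputable def pureDTSDCombination (μ ξ₁ ξ₂ ξ₃ : ℝ) : ℝ :=
  pureDTDisk μ ξ₁ * pureDTThreeHoled μ ξ₁ ξ₂ ξ₃
    + pureDTCylinder μ ξ₁ ξ₂ * pureDTCylinder μ ξ₁ ξ₃
    + deriv (fun t => (pureDTCylinder μ ξ₁ ξ₃ - pureDTCylinder μ t ξ₃) / (ξ₁ - t)) ξ₂
    + deriv (fun t => (pureDTCylinder μ ξ₁ ξ₂ - pureDTCylinder μ ξ₂ t) / (ξ₁ - t)) ξ₃

lemma DT_cyl_eq (μ t y : ℝ) (ht : 0 ≤ t + Real.sqrt μ) :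
    pureDTCylinder μ t y =
      (2 * (Real.sqrt (t + Real.sqrt μ) * Real.sqrt (y + Real.sqrt μ)) *
        (Real.sqrt (t + Real.sqrt μ) + Real.sqrt (y + Real.sqrt μ)) ^ 2)⁻¹ := by
  rw [pureDTCylinder, Real.sqrt_mul ht, one_div, mul_assoc]

lemma DT_cyl_eq' (μ y t : ℝ) (hy : 0 ≤ y + Real.sqrt μ) :
    pureDTCylinder μ y t =
      (2 * (Real.sqrt (t + Real.sqrt μ) * Real.sqrt (y + Real.sqrt μ)) *
        (Real.sqrt (t + Real.sqrt μ) + Real.sqrt (y + Real.sqrt μ)) ^ 2)⁻¹ := by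
  rw [pureDTCylinder, Real.sqrt_mul hy, one_div,
    mul_comm (Real.sqrt (y + Real.sqrt μ)), add_comm (Real.sqrt (y + Real.sqrt μ))]

lemma DT_rpow_three_halves (x : ℝ) (hx : 0 ≤ x) :
    x ^ ((3 : ℝ) / 2) = Real.sqrt x ^ 3 := by
  rw [show ((3 : ℝ) / 2) = (1 / 2) * 3 by norm_num, Real.rpow_mul hx, ← Real.sqrt_eq_rpow,
    show ((3 : ℝ) : ℝ) = ((3 : ℕ) : ℝ) by norm_num, Real.rpow_natCast]

lemma DT_deriv_aux (s C ξ₁ c x : ℝ) (hx : 0 < x + s) (hne : ξ₁ ≠ x) (hc : 0 < c) :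
    deriv (fun t => (C - (2 * (Real.sqrt (t + s) * c) * (Real.sqrt (t + s) + c) ^ 2)⁻¹)
        / (ξ₁ - t)) x =
      ((c * (Real.sqrt (x + s) + c) ^ 2 / Real.sqrt (x + s)
            + 2 * c * (Real.sqrt (x + s) + c))
          / (2 * (Real.sqrt (x + s) * c) * (Real.sqrt (x + s) + c) ^ 2) ^ 2 * (ξ₁ - x)
        + (C - (2 * (Real.sqrt (x + s) * c) * (Real.sqrt (x + s) + c) ^ 2)⁻¹))
      / (ξ₁ - x) ^ 2 := by
  have hb : 0 < Real.sqrt (x + s) := Real.sqrt_pos.mpr hx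
  have hu : HasDerivAt (fun t => Real.sqrt (t + s)) (1 / (2 * Real.sqrt (x + s))) x := by
    have h1 : HasDerivAt (fun t : ℝ => t + s) 1 x := (hasDerivAt_id x).add_const s
    have h2 := (Real.hasDerivAt_sqrt (ne_of_gt hx)).comp x h1
    simpa [Function.comp_def] using h2
  have hq := ((hu.mul_const c).const_mul 2).mul ((hu.add_const c).pow 2)
  have hq0 : 2 * (Real.sqrt (x + s) * c) * (Real.sqrt (x + s) + c) ^ 2 ≠ 0 := by positivity
  have hinv := hq.inv hq0
  have hnum := (hasDerivAt_const x C).sub hinv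
  have hden : HasDerivAt (fun t : ℝ => ξ₁ - t) (-1) x := by
    simpa [Pi.sub_def] using (hasDerivAt_const x ξ₁).sub (hasDerivAt_id x)
  have hden0 : ξ₁ - x ≠ 0 := sub_ne_zero.mpr hne
  have hdiv := hnum.div hden hden0
  have hD : deriv (fun t => (C - (2 * (Real.sqrt (t + s) * c) * (Real.sqrt (t + s) + c) ^ 2)⁻¹)
      / (ξ₁ - t)) x = _ := hdiv.deriv
  rw [hD]
  simp only [Pi.sub_apply, Pi.mul_apply, Pi.pow_apply, Pi.inv_apply]
  field_simp
  ring

lemma DT_D2small (a b c : ℝ) (ha : 0 < a) (hb : 0 < b) (hc : 0 < c) (hab : a ≠ b) :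
    ((c * (b + c) ^ 2 / b + 2 * c * (b + c)) / (2 * (b * c) * (b + c) ^ 2) ^ 2 * (a ^ 2 - b ^ 2)
        + ((2 * (a * c) * (a + c) ^ 2)⁻¹ - (2 * (b * c) * (b + c) ^ 2)⁻¹)) / (a ^ 2 - b ^ 2) ^ 2
    = (3 * b + c) / (4 * b ^ 3 * c * (b + c) ^ 3 * (a ^ 2 - b ^ 2))
      - (a ^ 2 + a * b + b ^ 2 + 2 * a * c + 2 * b * c + c ^ 2)
        / (2 * a * b * c * (a - b) * (a + b) ^ 2 * (a + c) ^ 2 * (b + c) ^ 2) := by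
  have h1 : a - b ≠ 0 := sub_ne_zero.mpr hab
  have h2 : a + b ≠ 0 := by positivity
  have h3 : a ^ 2 - b ^ 2 ≠ 0 := by
    have : a ^ 2 - b ^ 2 = (a - b) * (a + b) := by ring
    rw [this]; exact mul_ne_zero h1 h2
  have h4 : a + c ≠ 0 := by positivity
  have h5 : b + c ≠ 0 := by positivity
  field_simp
  ring

lemma DT_final (a b c : ℝ) (ha : 0 < a) (hb : 0 < b) (hc : 0 < c)
    (hab : a ≠ b) (hac : a ≠ c) :
    (2 * (a * b) * (a + b) ^ 2)⁻¹ * (2 * (a * c) * (a + c) ^ 2)⁻¹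
    + ((3 * b + c) / (4 * b ^ 3 * c * (b + c) ^ 3 * (a ^ 2 - b ^ 2))
      - (a ^ 2 + a * b + b ^ 2 + 2 * a * c + 2 * b * c + c ^ 2)
        / (2 * a * b * c * (a - b) * (a + b) ^ 2 * (a + c) ^ 2 * (b + c) ^ 2))
    + ((3 * c + b) / (4 * c ^ 3 * b * (c + b) ^ 3 * (a ^ 2 - c ^ 2))
      - (a ^ 2 + a * c + c ^ 2 + 2 * a * b + 2 * c * b + b ^ 2)
        / (2 * a * c * b * (a - c) * (a + c) ^ 2 * (a + b) ^ 2 * (c + b) ^ 2))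
    = 1 / (4 * a ^ 2 * b ^ 3 * c ^ 3) := by
  have h1 : a - b ≠ 0 := sub_ne_zero.mpr hab
  have h1' : a - c ≠ 0 := sub_ne_zero.mpr hac
  have h2 : a + b ≠ 0 := by positivity
  have h4 : a + c ≠ 0 := by positivity
  have h5 : b + c ≠ 0 := by positivity
  have h3 : a ^ 2 - b ^ 2 ≠ 0 := by
    have : a ^ 2 - b ^ 2 = (a - b) * (a + b) := by ring
    rw [this]; exact mul_ne_zero h1 h2
  have h3' : a ^ 2 - c ^ 2 ≠ 0 := by
    have : a ^ 2 - c ^ 2 = (a - c) * (a + c) := by ring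
    rw [this]; exact mul_ne_zero h1' h4
  field_simp
  ring

lemma DT_T1 (s a b c x : ℝ) (hs : 0 < s) (ha : 0 < a) (hb : 0 < b) (hc : 0 < c)
    (hx : a ^ 2 = x + s) :
    (x - s / 2) * a * (1 / (6 * s * a ^ 3 * b ^ 3 * c ^ 3))
      = 1 / (6 * s * b ^ 3 * c ^ 3) - 1 / (4 * a ^ 2 * b ^ 3 * c ^ 3) := by
  have hx' : x = a ^ 2 - s := by linarith
  rw [hx']
  field_simp
  ring

lemma DT_combo (μ ξ₁ ξ₂ ξ₃ : ℝ) (hμ : 0 < μ) (h₁ : -Real.sqrt μ < ξ₁)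
    (h₂ : -Real.sqrt μ < ξ₂) (h₃ : -Real.sqrt μ < ξ₃) (h₁₂ : ξ₁ ≠ ξ₂) (h₁₃ : ξ₁ ≠ ξ₃) :
    pureDTSDCombination μ ξ₁ ξ₂ ξ₃
      = 1 / (6 * Real.sqrt μ * Real.sqrt (ξ₂ + Real.sqrt μ) ^ 3
          * Real.sqrt (ξ₃ + Real.sqrt μ) ^ 3) := by
  have hs : 0 < Real.sqrt μ := Real.sqrt_pos.mpr hμ
  have hx1 : 0 < ξ₁ + Real.sqrt μ := by linarith
  have hx2 : 0 < ξ₂ + Real.sqrt μ := by linarith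
  have hx3 : 0 < ξ₃ + Real.sqrt μ := by linarith
  have ha : 0 < Real.sqrt (ξ₁ + Real.sqrt μ) := Real.sqrt_pos.mpr hx1
  have hb : 0 < Real.sqrt (ξ₂ + Real.sqrt μ) := Real.sqrt_pos.mpr hx2
  have hc : 0 < Real.sqrt (ξ₃ + Real.sqrt μ) := Real.sqrt_pos.mpr hx3
  have ha2 : Real.sqrt (ξ₁ + Real.sqrt μ) ^ 2 = ξ₁ + Real.sqrt μ := Real.sq_sqrt hx1.le
  have hb2 : Real.sqrt (ξ₂ + Real.sqrt μ) ^ 2 = ξ₂ + Real.sqrt μ := Real.sq_sqrt hx2.le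
  have hc2 : Real.sqrt (ξ₃ + Real.sqrt μ) ^ 2 = ξ₃ + Real.sqrt μ := Real.sq_sqrt hx3.le
  have hab : Real.sqrt (ξ₁ + Real.sqrt μ) ≠ Real.sqrt (ξ₂ + Real.sqrt μ) := fun h =>
    h₁₂ (by have := (Real.sqrt_inj hx1.le hx2.le).mp h; linarith)
  have hac : Real.sqrt (ξ₁ + Real.sqrt μ) ≠ Real.sqrt (ξ₃ + Real.sqrt μ) := fun h =>
    h₁₃ (by have := (Real.sqrt_inj hx1.le hx3.le).mp h; linarith)
  have e12 : ξ₁ - ξ₂ = Real.sqrt (ξ₁ + Real.sqrt μ) ^ 2 - Real.sqrt (ξ₂ + Real.sqrt μ) ^ 2 := by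
    rw [ha2, hb2]; ring
  have e13 : ξ₁ - ξ₃ = Real.sqrt (ξ₁ + Real.sqrt μ) ^ 2 - Real.sqrt (ξ₃ + Real.sqrt μ) ^ 2 := by
    rw [ha2, hc2]; ring
  -- second deriv term
  have hev2 : (fun t => (pureDTCylinder μ ξ₁ ξ₃ - pureDTCylinder μ t ξ₃) / (ξ₁ - t))
      =ᶠ[nhds ξ₂] (fun t => (pureDTCylinder μ ξ₁ ξ₃
        - (2 * (Real.sqrt (t + Real.sqrt μ) * Real.sqrt (ξ₃ + Real.sqrt μ))
          * (Real.sqrt (t + Real.sqrt μ) + Real.sqrt (ξ₃ + Real.sqrt μ)) ^ 2)⁻¹)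
        / (ξ₁ - t)) := by
    have hopen : ∀ᶠ t in nhds ξ₂, -Real.sqrt μ < t := eventually_gt_nhds h₂
    filter_upwards [hopen] with t ht
    rw [DT_cyl_eq μ t ξ₃ (by linarith)]
  have hD2 := hev2.deriv_eq.trans
    (DT_deriv_aux (Real.sqrt μ) (pureDTCylinder μ ξ₁ ξ₃) ξ₁ (Real.sqrt (ξ₃ + Real.sqrt μ))
      ξ₂ hx2 h₁₂ hc)
  conv at hD2 => rhs; rw [DT_cyl_eq μ ξ₁ ξ₃ hx1.le, e12]
  have hD2' := hD2.trans (DT_D2small _ _ _ ha hb hc hab)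
  -- third deriv term
  have hfun3 : (fun t => (pureDTCylinder μ ξ₁ ξ₂ - pureDTCylinder μ ξ₂ t) / (ξ₁ - t))
      = (fun t => (pureDTCylinder μ ξ₁ ξ₂
        - (2 * (Real.sqrt (t + Real.sqrt μ) * Real.sqrt (ξ₂ + Real.sqrt μ))
          * (Real.sqrt (t + Real.sqrt μ) + Real.sqrt (ξ₂ + Real.sqrt μ)) ^ 2)⁻¹)
        / (ξ₁ - t)) :=
    funext fun t => by rw [DT_cyl_eq' μ ξ₂ t hx2.le]
  have hD3 := (congrArg (fun f => deriv f ξ₃) hfun3).trans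
    (DT_deriv_aux (Real.sqrt μ) (pureDTCylinder μ ξ₁ ξ₂) ξ₁ (Real.sqrt (ξ₂ + Real.sqrt μ))
      ξ₃ hx3 h₁₃ hb)
  conv at hD3 => rhs; rw [DT_cyl_eq μ ξ₁ ξ₂ hx1.le, e13]
  have hD3' := hD3.trans (DT_D2small _ _ _ ha hc hb hac)
  -- assemble
  rw [pureDTSDCombination, hD2', hD3', DT_cyl_eq μ ξ₁ ξ₂ hx1.le, DT_cyl_eq μ ξ₁ ξ₃ hx1.le,
    pureDTDisk, pureDTThreeHoled, DT_rpow_three_halves _ hx1.le, DT_rpow_three_halves _ hx2.le,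
    DT_rpow_three_halves _ hx3.le,
    DT_T1 (Real.sqrt μ) (Real.sqrt (ξ₁ + Real.sqrt μ)) (Real.sqrt (ξ₂ + Real.sqrt μ))
      (Real.sqrt (ξ₃ + Real.sqrt μ)) ξ₁ hs ha hb hc ha2]
  have hfin := DT_final (Real.sqrt (ξ₁ + Real.sqrt μ)) (Real.sqrt (ξ₂ + Real.sqrt μ))
    (Real.sqrt (ξ₃ + Real.sqrt μ)) ha hb hc hab hac
  linarith

/-- The (h,N) = (0,3) case of the perturbative Schwinger–Dyson equation of pure DT
(Proposition 1): the displayed combination does not depend on `ξ₁`. -/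
theorem pure_DT_genus_zero_three_point_SD_independence
    (μ : ℝ) (hμ : 0 < μ) (ξ₁ ξ₁' ξ₂ ξ₃ : ℝ)
    (h₁ : -Real.sqrt μ < ξ₁) (h₁' : -Real.sqrt μ < ξ₁')
    (h₂ : -Real.sqrt μ < ξ₂) (h₃ : -Real.sqrt μ < ξ₃)
    (h₁₂ : ξ₁ ≠ ξ₂) (h₁₃ : ξ₁ ≠ ξ₃) (h₂₃ : ξ₂ ≠ ξ₃)
    (h₁₂' : ξ₁' ≠ ξ₂) (h₁₃' : ξ₁' ≠ ξ₃) :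
    pureDTSDCombination μ ξ₁ ξ₂ ξ₃ = pureDTSDCombination μ ξ₁' ξ₂ ξ₃ := by
  rw [DT_combo μ ξ₁ ξ₂ ξ₃ hμ h₁ h₂ h₃ h₁₂ h₁₃,
    DT_combo μ ξ₁' ξ₂ ξ₃ hμ h₁' h₂ h₃ h₁₂' h₁₃']
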